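/- Let n and d be positive integers, ℓ a Kupisch series of type Ã_{n-1}, f(i) = i - ℓ(i) - d + 1, I = { i ∈ ℤ : (i mod n) ∈ J }, ι : ℤ → I the unique order-preserving bijection, and ℓ'(k) = |[f(ι(k)), ι(k)] ∩ I| - d for k ∈ ℤ. Then for every k ∈ ℤ one has ℓ'(k) ≤ ℓ'(k-1) + 1, and moreover ℓ'(k) ≤ ℓ'(k-1). -/

import Mathlib

/-- The set of periodic points of the induced map `f̄ : ℤ/nℤ → ℤ/nℤ`. -/
def Jset (n : ℕ) (fbar : ZMod n → ZMod n) : Set (ZMod n) :=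
  {j | ∃ N : ℕ, 1 ≤ N ∧ fbar^[N] j = j}

/-- The set of integers whose residue mod `n` lies in `J`. -/
def Iset (n : ℕ) (fbar : ZMod n → ZMod n) : Set ℤ :=
  {i | (i : ZMod n) ∈ Jset n fbar}

/-- with `ℓ' k = |[f(ι k), ι k] ∩ I| - d` one has
`ℓ' k ≤ ℓ' (k-1) + 1` and moreover `ℓ' k ≤ ℓ' (k-1)` for every `k`. -/
theorem ellprime_nonincreasing (n d : ℕ) (hn : 0 < n) (hd : 0 < d) (ℓ : ℤ → ℤ)
    (hK1 : ∀ i : ℤ, 1 ≤ ℓ i) (hK2 : ∀ i : ℤ, ℓ i ≤ ℓ (i - 1) + 1)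
    (hKper : ∀ i : ℤ, ℓ (i + n) = ℓ i)
    (f : ℤ → ℤ) (hf : ∀ i : ℤ, f i = i - ℓ i - d + 1)
    (fbar : ZMod n → ZMod n)
    (hfbar : ∀ i : ℤ, fbar (i : ZMod n) = ((f i : ℤ) : ZMod n))
    (ι : ℤ → ℤ) (hι : StrictMono ι) (hrange : Set.range ι = Iset n fbar)
    (ℓ' : ℤ → ℤ)
    (hℓ' : ∀ k : ℤ,
      ℓ' k = ((Set.Icc (f (ι k)) (ι k) ∩ Iset n fbar).ncard : ℤ) - d) :
    ∀ k : ℤ, ℓ' k ≤ ℓ' (k - 1) + 1 ∧ ℓ' k ≤ ℓ' (k - 1) := by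
  -- f is monotone
  have hfm : Monotone f := by
    apply monotone_int_of_le_succ
    intro i
    have h2 := hK2 (i + 1)
    simp only [add_sub_cancel_right] at h2
    rw [hf, hf]
    omega
  -- f i < i
  have hflt : ∀ i : ℤ, f i < i := by
    intro i
    have := hK1 i
    rw [hf]
    omega
  -- ℓ is periodic under all integer multiples of n
  have hper : ∀ (m : ℤ) (i : ℤ), ℓ (i + m * n) = ℓ i := by
    intro m
    induction m using Int.induction_on with
    | zero => simp
    | succ m ih =>
      intro i
      have := hKper (i + m * n)
      have e : i + (m + 1 : ℤ) * n = (i + m * n) + n := by ring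
      rw [e, this, ih]
    | pred m ih =>
      intro i
      have := hKper (i + (-(m:ℤ) - 1) * n)
      have e : i + (-(m:ℤ) - 1) * n + n = i + (-(m:ℤ)) * n := by ring
      rw [e] at this
      rw [← this]
      exact ih i
  have hfper : ∀ (m : ℤ) (i : ℤ), f (i + m * n) = f i + m * n := by
    intro m i
    rw [hf, hf, hper]
    ring
  -- J is closed under fbar
  have hJclosed : ∀ j ∈ Jset n fbar, fbar j ∈ Jset n fbar := by
    rintro j ⟨N, hN1, hNj⟩
    refine ⟨N, hN1, ?_⟩
    calc fbar^[N] (fbar j) = fbar^[N + 1] j := (Function.iterate_succ_apply fbar N j).symm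
      _ = fbar (fbar^[N] j) := Function.iterate_succ_apply' fbar N j
      _ = fbar j := by rw [hNj]
  -- I is closed under f
  have hIclosed : ∀ i ∈ Iset n fbar, f i ∈ Iset n fbar := by
    intro i hi
    have : fbar (i : ZMod n) ∈ Jset n fbar := hJclosed _ hi
    rwa [hfbar] at this
  -- fbar is injective on J
  have hJinj : ∀ j ∈ Jset n fbar, ∀ j' ∈ Jset n fbar, fbar j = fbar j' → j = j' := by
    rintro j ⟨N, hN1, hNj⟩ j' ⟨M, hM1, hMj⟩ heq
    have hKj : fbar^[N * M] j = j := by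
      rw [Function.iterate_mul]
      exact Function.iterate_fixed hNj M
    have hKj' : fbar^[N * M] j' = j' := by
      rw [mul_comm, Function.iterate_mul]
      exact Function.iterate_fixed hMj N
    have hK1 : 1 ≤ N * M := Nat.one_le_iff_ne_zero.mpr (by positivity)
    have e : N * M = (N * M - 1) + 1 := by omega
    rw [e, Function.iterate_succ_apply, heq] at hKj
    rw [e, Function.iterate_succ_apply] at hKj'
    exact hKj.symm.trans hKj'
  -- f is injective on I
  have hfinj : ∀ a ∈ Iset n fbar, ∀ b ∈ Iset n fbar, f a = f b → a = b := by
    intro a ha b hb heq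
    have hbar : fbar (a : ZMod n) = fbar (b : ZMod n) := by
      rw [hfbar, hfbar, heq]
    have hab : (a : ZMod n) = (b : ZMod n) := hJinj _ ha _ hb hbar
    have hmod : a ≡ b [ZMOD (n : ℕ)] := (ZMod.intCast_eq_intCast_iff _ _ _).mp hab
    have hdvd : (n : ℤ) ∣ b - a := Int.ModEq.dvd hmod
    obtain ⟨m, hm⟩ := hdvd
    rw [mul_comm] at hm
    have hb' : b = a + m * n := by omega
    have : f b = f a + m * n := by rw [hb', hfper]
    have hmn : m * n = 0 := by omega
    have : m = 0 := by
      rcases mul_eq_zero.mp hmn with h | h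
      · exact h
      · exfalso; omega
    omega
  -- main argument
  intro k
  set a := ι (k - 1) with ha_def
  set b := ι k with hb_def
  have hab : a < b := hι (by omega : k - 1 < k)
  have haI : a ∈ Iset n fbar := by rw [← hrange]; exact ⟨k - 1, rfl⟩
  have hbI : b ∈ Iset n fbar := by rw [← hrange]; exact ⟨k, rfl⟩
  have hgap : ∀ x ∈ Iset n fbar, ¬(a < x ∧ x < b) := by
    intro x hx ⟨h1, h2⟩
    rw [← hrange] at hx
    obtain ⟨m, rfl⟩ := hx
    have hm1 : k - 1 < m := hι.lt_iff_lt.mp h1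
    have hm2 : m < k := hι.lt_iff_lt.mp h2
    omega
  have hfab : f a < f b := by
    rcases lt_or_eq_of_le (hfm hab.le) with h | h
    · exact h
    · exact absurd (hfinj a haI b hbI h) hab.ne
  set A := Set.Icc (f b) b ∩ Iset n fbar with hA
  set B := Set.Icc (f a) a ∩ Iset n fbar with hB
  have hBfin : B.Finite := (Set.finite_Icc _ _).inter_of_left _
  have hfaB : f a ∈ B := ⟨⟨le_refl _, (hflt a).le⟩, hIclosed a haI⟩
  have hsub : A ⊆ insert b (B \ {f a}) := by
    rintro x ⟨⟨h1, h2⟩, hxI⟩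
    rcases eq_or_lt_of_le h2 with h | h
    · exact Or.inl h
    · right
      have hxa : x ≤ a := by
        by_contra hc
        exact hgap x hxI ⟨by omega, h⟩
      exact ⟨⟨⟨hfab.le.trans h1, hxa⟩, hxI⟩, by
        simp only [Set.mem_singleton_iff]
        omega⟩
  have hfin' : (insert b (B \ {f a})).Finite := (hBfin.diff (t := {f a})).insert b
  have hcard : A.ncard ≤ B.ncard := by
    calc A.ncard ≤ (insert b (B \ {f a})).ncard := Set.ncard_le_ncard hsub hfin'
      _ ≤ (B \ {f a}).ncard + 1 := Set.ncard_insert_le _ _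
      _ = B.ncard := Set.ncard_diff_singleton_add_one hfaB hBfin
  have hcard' : (A.ncard : ℤ) ≤ (B.ncard : ℤ) := by exact_mod_cast hcard
  have e1 : ℓ' k = (A.ncard : ℤ) - d := by rw [hℓ' k, hA, hb_def]
  have e2 : ℓ' (k - 1) = (B.ncard : ℤ) - d := by rw [hℓ' (k - 1), hB, ha_def]
  have hmain : ℓ' k ≤ ℓ' (k - 1) := by omega
  exact ⟨by omega, hmain⟩
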